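/- arXiv:2008.01075 — 6 statements merged into one kernel-verified Lean document; each statement's English description precedes it below -/
import Mathlib

section
/- Let l be a list of natural numbers whose nim-sum (the XOR of all its entries) is 0. Then for every index m < l.length and every natural number y with y ≠ l.get m, the list obtained from l by replacing the entry at index m with y has nonzero nim-sum. (In the game of Nim: if after a player's turn the nim-sum equals 0, any move by the next player changes it to a nonzero value.) -/
lemma xor_left_comm' (a b c : ℕ) : a ^^^ (b ^^^ c) = b ^^^ (a ^^^ c) := by
  rw [← Nat.xor_assoc, Nat.xor_comm a b, Nat.xor_assoc]

lemma set_foldr_xor (l : List ℕ) : ∀ (m : ℕ) (hm : m < l.length) (y : ℕ),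
    (l.set m y).foldr (· ^^^ ·) 0 = l.foldr (· ^^^ ·) 0 ^^^ l.get ⟨m, hm⟩ ^^^ y := by
  induction l with
  | nil => intro m hm; simp at hm
  | cons a t ih =>
    intro m hm y
    cases m with
    | zero =>
      simp only [List.set, List.foldr, List.get]
      rw [Nat.xor_comm a, Nat.xor_assoc _ a a, Nat.xor_self, Nat.xor_zero, Nat.xor_comm]
    | succ n =>
      simp only [List.set, List.foldr, List.get]
      rw [ih n (by simpa using hm) y]
      simp [Nat.xor_assoc, xor_left_comm']

theorem nim_zero_sum_must_change (l : List ℕ)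
    (h : l.foldr (· ^^^ ·) 0 = 0) :
    ∀ (m : ℕ) (hm : m < l.length) (y : ℕ), y ≠ l.get ⟨m, hm⟩ →
      (l.set m y).foldr (· ^^^ ·) 0 ≠ 0 := by
  intro m hm y hy
  rw [set_foldr_xor l m hm y, h]
  simp only [Nat.zero_xor]
  intro hz
  exact hy (xor_eq_zero_iff.mp hz).symm
end

section
/- Let l be a list of natural numbers whose nim-sum (the XOR of all its entries) is nonzero. Then there exists an index m < l.length and a natural number y < l.get m such that the list obtained from l by replacing the entry at index m with y has nim-sum 0. (In the game of Nim: if after a player's turn the nim-sum is nonzero, the next player can always make it 0 by removing objects from a single pile.) -/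
lemma foldr_xor_set (l : List ℕ) (m : ℕ) (y : ℕ) (hm : m < l.length) :
    (l.set m y).foldr (· ^^^ ·) 0 = y ^^^ (l.get ⟨m, hm⟩) ^^^ l.foldr (· ^^^ ·) 0 := by
  induction l generalizing m with
  | nil => simp at hm
  | cons x t ih =>
    cases m with
    | zero =>
      simp [List.set, Nat.xor_assoc, ← Nat.xor_assoc y x, Nat.xor_comm y x]
    | succ n =>
      simp only [List.length_cons, Nat.succ_lt_succ_iff] at hm
      simp only [List.set, List.foldr_cons, List.get]
      rw [ih n hm]
      rw [← Nat.xor_assoc, ← Nat.xor_assoc, ← Nat.xor_assoc]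
      congr 1
      conv_rhs => rw [Nat.xor_comm _ x]
      rw [Nat.xor_assoc]

lemma exists_mem_testBit (l : List ℕ) (i : ℕ)
    (h : (l.foldr (· ^^^ ·) 0).testBit i = true) :
    ∃ (m : ℕ) (hm : m < l.length), (l.get ⟨m, hm⟩).testBit i = true := by
  induction l with
  | nil => simp at h
  | cons x t ih =>
    simp only [List.foldr_cons, Nat.testBit_xor] at h
    by_cases hx : x.testBit i = true
    · exact ⟨0, by simp, hx⟩
    · simp only [Bool.not_eq_true] at hx
      rw [hx] at h
      simp only [Bool.false_xor] at h
      obtain ⟨m, hm, hb⟩ := ih h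
      exact ⟨m + 1, by simpa using Nat.succ_lt_succ hm, hb⟩

theorem nim_nonzero_sum_can_zero (l : List ℕ)
    (h : l.foldr (· ^^^ ·) 0 ≠ 0) :
    ∃ (m : ℕ) (hm : m < l.length) (y : ℕ), y < l.get ⟨m, hm⟩ ∧
      (l.set m y).foldr (· ^^^ ·) 0 = 0 := by
  set s := l.foldr (· ^^^ ·) 0 with hs
  obtain ⟨i, hi, hi'⟩ := Nat.exists_most_significant_bit h
  obtain ⟨m, hm, hb⟩ := exists_mem_testBit l i hi
  set x := l.get ⟨m, hm⟩ with hx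
  refine ⟨m, hm, x ^^^ s, ?_, ?_⟩
  · refine Nat.lt_of_testBit i ?_ hb fun j hj => ?_
    · rw [Nat.testBit_xor, hb, hi]; rfl
    · rw [Nat.testBit_xor, hi' _ hj, Bool.xor_false]
  · rw [foldr_xor_set l m (x ^^^ s) hm, ← hx, ← hs]
    rw [Nat.xor_assoc, Nat.xor_comm x s, ← Nat.xor_assoc, Nat.xor_assoc]
    simp
end

section
/- Let l be a list of natural numbers, regarded as the piles of a game of Nim, and consider the combinatorial (pre)game given by the disjunctive sum of the single-pile nim games nim(n) for n in l. This game sum is equivalent to the zero game (i.e., the first player to go loses under normal play) if and only if the nim-sum (XOR) of the entries of l equals 0. -/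
universe u

namespace SetTheory

/-- Pre-game, as in Mathlib's former `SetTheory.PGame` (removed from Mathlib). -/
inductive PGame : Type (u + 1)
  | mk : ∀ α β : Type u, (α → PGame) → (β → PGame) → PGame

namespace PGame

/-- The zero pre-game `{ | }`. -/
instance : Zero PGame.{u} :=
  ⟨⟨PEmpty, PEmpty, PEmpty.elim, PEmpty.elim⟩⟩

/-- The pair `(x ≤ y, x ⧏ y)`, where `x ≤ y ↔ (∀ i, xL i ⧏ y) ∧ (∀ j, x ⧏ yR j)` and
`x ⧏ y ↔ (∃ i, x ≤ yL i) ∨ (∃ j, xR j ≤ y)`. -/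
noncomputable def leLf (x : PGame.{u}) : PGame.{u} → Prop × Prop :=
  PGame.rec (motive := fun _ => PGame.{u} → Prop × Prop)
    (fun xl xr xL xR IHxl IHxr => fun y =>
      PGame.rec (motive := fun _ => Prop × Prop)
        (fun yl yr yL yR IHyl IHyr =>
          ((∀ i, (IHxl i (mk yl yr yL yR)).2) ∧ (∀ j, (IHyr j).2),
           (∃ i, (IHyl i).1) ∨ (∃ j, (IHxr j (mk yl yr yL yR)).1))) y) x

instance : LE PGame.{u} :=
  ⟨fun x y => (leLf x y).1⟩

/-- Equivalence of pre-games: `x ≤ y ∧ y ≤ x`. -/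
def Equiv (x y : PGame.{u}) : Prop :=
  x ≤ y ∧ y ≤ x

instance : HasEquiv PGame.{u} :=
  ⟨Equiv⟩

/-- The disjunctive sum of pre-games. -/
noncomputable def add (x : PGame.{u}) : PGame.{u} → PGame.{u} :=
  PGame.rec (motive := fun _ => PGame.{u} → PGame.{u})
    (fun xl xr _ _ IHxl IHxr => fun y =>
      PGame.rec (motive := fun _ => PGame.{u})
        (fun yl yr yL yR IHyl IHyr =>
          mk (xl ⊕ yl) (xr ⊕ yr)
            (Sum.rec (fun i => IHxl i (mk yl yr yL yR)) IHyl)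
            (Sum.rec (fun i => IHxr i (mk yl yr yL yR)) IHyr)) y) x

noncomputable instance : Add PGame.{u} :=
  ⟨add⟩

/-- The pre-game `nim o`, where a move is to any strictly smaller ordinal. -/
noncomputable def nim (o : Ordinal.{u}) : PGame.{u} :=
  mk o.ToType o.ToType
    (fun x => nim (Ordinal.typein (α := o.ToType) (· < ·) x))
    (fun x => nim (Ordinal.typein (α := o.ToType) (· < ·) x))
termination_by o
decreasing_by all_goals exact Ordinal.typein_lt_self x

end PGame

end SetTheory

namespace NimPort

open SetTheory PGame

def LM : PGame.{u} → Type u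
  | PGame.mk l _ _ _ => l

def RM : PGame.{u} → Type u
  | PGame.mk _ r _ _ => r

def mL : (g : PGame.{u}) → LM g → PGame.{u}
  | PGame.mk _ _ L _, i => L i

def mR : (g : PGame.{u}) → RM g → PGame.{u}
  | PGame.mk _ _ _ R, j => R j

def lf (x y : PGame.{u}) : Prop := (leLf x y).2

theorem le_iff (x y : PGame.{u}) :
    x ≤ y ↔ (∀ i, lf (mL x i) y) ∧ (∀ j, lf x (mR y j)) := by
  cases x; cases y; exact Iff.rfl

theorem lf_iff (x y : PGame.{u}) :
    lf x y ↔ (∃ i, x ≤ mL y i) ∨ (∃ j, mR x j ≤ y) := by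
  cases x; cases y; exact Iff.rfl

theorem le_zero_iff' (g : PGame.{u}) : g ≤ 0 ↔ ∀ i, lf (mL g i) 0 := by
  rw [le_iff]
  exact ⟨fun h => h.1, fun h => ⟨h, fun j => PEmpty.elim j⟩⟩

theorem zero_le_iff' (g : PGame.{u}) : 0 ≤ g ↔ ∀ j, lf 0 (mR g j) := by
  rw [le_iff]
  exact ⟨fun h => h.2, fun h => ⟨fun i => PEmpty.elim i, h⟩⟩

theorem lf_zero_iff' (g : PGame.{u}) : lf g 0 ↔ ∃ j, mR g j ≤ 0 := by
  rw [lf_iff]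
  constructor
  · rintro (⟨i, _⟩ | h)
    · exact PEmpty.elim i
    · exact h
  · intro h; exact Or.inr h

theorem zero_lf_iff' (g : PGame.{u}) : lf 0 g ↔ ∃ i, 0 ≤ mL g i := by
  rw [lf_iff]
  constructor
  · rintro (h | ⟨j, _⟩)
    · exact h
    · exact PEmpty.elim j
  · intro h; exact Or.inl h

theorem add_left (x y : PGame.{u}) :
    (∀ k : LM (x + y), (∃ i, mL (x + y) k = mL x i + y) ∨ (∃ j, mL (x + y) k = x + mL y j)) ∧
    (∀ i, ∃ k, mL (x + y) k = mL x i + y) ∧ (∀ j, ∃ k, mL (x + y) k = x + mL y j) := by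
  cases x; cases y
  refine ⟨?_, fun i => ⟨Sum.inl i, rfl⟩, fun j => ⟨Sum.inr j, rfl⟩⟩
  rintro (i | j)
  · exact Or.inl ⟨i, rfl⟩
  · exact Or.inr ⟨j, rfl⟩

theorem add_right (x y : PGame.{u}) :
    (∀ k : RM (x + y), (∃ i, mR (x + y) k = mR x i + y) ∨ (∃ j, mR (x + y) k = x + mR y j)) ∧
    (∀ i, ∃ k, mR (x + y) k = mR x i + y) ∧ (∀ j, ∃ k, mR (x + y) k = x + mR y j) := by
  cases x; cases y
  refine ⟨?_, fun i => ⟨Sum.inl i, rfl⟩, fun j => ⟨Sum.inr j, rfl⟩⟩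
  rintro (i | j)
  · exact Or.inl ⟨i, rfl⟩
  · exact Or.inr ⟨j, rfl⟩

theorem nim_left (o : Ordinal.{u}) :
    (∀ k : LM (nim o), ∃ a < o, mL (nim o) k = nim a) ∧ (∀ a < o, ∃ k, mL (nim o) k = nim a) := by
  rw [nim]
  refine ⟨fun k => ⟨_, Ordinal.typein_lt_self k, rfl⟩, fun a h => ?_⟩
  have h' : a < Ordinal.type (α := o.ToType) (· < ·) := by rw [Ordinal.type_toType]; exact h
  refine ⟨Ordinal.enum (α := o.ToType) (· < ·) ⟨a, h'⟩, ?_⟩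
  show nim _ = nim a
  rw [Ordinal.typein_enum]

theorem nim_right (o : Ordinal.{u}) :
    (∀ k : RM (nim o), ∃ a < o, mR (nim o) k = nim a) ∧ (∀ a < o, ∃ k, mR (nim o) k = nim a) := by
  rw [nim]
  refine ⟨fun k => ⟨_, Ordinal.typein_lt_self k, rfl⟩, fun a h => ?_⟩
  have h' : a < Ordinal.type (α := o.ToType) (· < ·) := by rw [Ordinal.type_toType]; exact h
  refine ⟨Ordinal.enum (α := o.ToType) (· < ·) ⟨a, h'⟩, ?_⟩
  show nim _ = nim a
  rw [Ordinal.typein_enum]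

theorem nat_of_lt (n : ℕ) (a : Ordinal.{u}) (h : a < (n : Ordinal)) : ∃ m : ℕ, m < n ∧ a = m := by
  obtain ⟨m, rfl⟩ := Ordinal.lt_omega0.1 (lt_trans h (Ordinal.nat_lt_omega0 n))
  exact ⟨m, by exact_mod_cast h, rfl⟩

noncomputable def F (l : List ℕ) : PGame.{u} :=
  l.foldr (fun (n : ℕ) (G : SetTheory.PGame) => SetTheory.PGame.nim (n : Ordinal) + G) 0

def X (l : List ℕ) : ℕ := l.foldr (· ^^^ ·) 0

inductive Mv : List ℕ → List ℕ → Prop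
  | head {n m : ℕ} {t : List ℕ} : m < n → Mv (n :: t) (m :: t)
  | tail {n : ℕ} {t t' : List ℕ} : Mv t t' → Mv (n :: t) (n :: t')

theorem Mv_sum {l l' : List ℕ} (h : Mv l l') : l'.sum < l.sum := by
  induction h with
  | head h => simp only [List.sum_cons]; omega
  | tail _ ih => simp only [List.sum_cons]; omega

theorem Mv_xor {l l' : List ℕ} (h : Mv l l') : X l' ≠ X l := by
  induction h with
  | @head n m t h =>
    intro e
    have e' : m ^^^ X t = n ^^^ X t := e
    have := congrArg (· ^^^ X t) e'
    simp [Nat.xor_assoc] at this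
    omega
  | @tail n t t' _ ih =>
    intro e
    have e' : n ^^^ X t' = n ^^^ X t := e
    have := congrArg (n ^^^ ·) e'
    simp [← Nat.xor_assoc] at this
    exact ih this

theorem mex_move : ∀ (l : List ℕ) (a : ℕ), a < X l → ∃ l', Mv l l' ∧ X l' = a
  | [], a, h => by simp [X] at h
  | (n :: t), a, h => by
    have h' : a < n ^^^ X t := h
    rcases Nat.lt_xor_cases h' with h1 | h1
    · refine ⟨(a ^^^ X t) :: t, Mv.head h1, ?_⟩
      show (a ^^^ X t) ^^^ X t = a
      rw [Nat.xor_assoc, Nat.xor_self, Nat.xor_zero]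
    · obtain ⟨t', hm, hx⟩ := mex_move t _ h1
      refine ⟨n :: t', Mv.tail hm, ?_⟩
      show n ^^^ X t' = a
      rw [hx, Nat.xor_comm a n, ← Nat.xor_assoc, Nat.xor_self, Nat.zero_xor]

theorem F_left (l : List ℕ) :
    (∀ k : LM (F.{u} l), ∃ l', Mv l l' ∧ mL (F l) k = F l') ∧
    (∀ l', Mv l l' → ∃ k, mL (F.{u} l) k = F l') := by
  induction l with
  | nil =>
    refine ⟨fun k => PEmpty.elim k, fun l' h => ?_⟩
    cases h
  | cons n t ih =>
    have hF : F.{u} (n :: t) = nim (n : Ordinal) + F t := rfl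
    rw [hF]
    obtain ⟨A1, A2, A3⟩ := add_left (nim (n : Ordinal.{u})) (F.{u} t)
    refine ⟨fun k => ?_, fun l' h => ?_⟩
    · rcases A1 k with ⟨i, hi⟩ | ⟨j, hj⟩
      · obtain ⟨a, ha, he⟩ := (nim_left _).1 i
        obtain ⟨m, hm, rfl⟩ := nat_of_lt n a ha
        exact ⟨m :: t, Mv.head hm, by rw [hi, he]; rfl⟩
      · obtain ⟨t', hm, he⟩ := ih.1 j
        exact ⟨n :: t', Mv.tail hm, by rw [hj, he]; rfl⟩
    · cases h with
      | @head _ m _ hm =>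
        obtain ⟨i, hi⟩ := (nim_left (n : Ordinal.{u})).2 (m : Ordinal) (by exact_mod_cast hm)
        obtain ⟨k, hk⟩ := A2 i
        exact ⟨k, by rw [hk, hi]; rfl⟩
      | @tail _ _ t' hm =>
        obtain ⟨j, hj⟩ := ih.2 t' hm
        obtain ⟨k, hk⟩ := A3 j
        exact ⟨k, by rw [hk, hj]; rfl⟩

theorem F_right (l : List ℕ) :
    (∀ k : RM (F.{u} l), ∃ l', Mv l l' ∧ mR (F l) k = F l') ∧
    (∀ l', Mv l l' → ∃ k, mR (F.{u} l) k = F l') := by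
  induction l with
  | nil =>
    refine ⟨fun k => PEmpty.elim k, fun l' h => ?_⟩
    cases h
  | cons n t ih =>
    have hF : F.{u} (n :: t) = nim (n : Ordinal) + F t := rfl
    rw [hF]
    obtain ⟨A1, A2, A3⟩ := add_right (nim (n : Ordinal.{u})) (F.{u} t)
    refine ⟨fun k => ?_, fun l' h => ?_⟩
    · rcases A1 k with ⟨i, hi⟩ | ⟨j, hj⟩
      · obtain ⟨a, ha, he⟩ := (nim_right _).1 i
        obtain ⟨m, hm, rfl⟩ := nat_of_lt n a ha
        exact ⟨m :: t, Mv.head hm, by rw [hi, he]; rfl⟩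
      · obtain ⟨t', hm, he⟩ := ih.1 j
        exact ⟨n :: t', Mv.tail hm, by rw [hj, he]; rfl⟩
    · cases h with
      | @head _ m _ hm =>
        obtain ⟨i, hi⟩ := (nim_right (n : Ordinal.{u})).2 (m : Ordinal) (by exact_mod_cast hm)
        obtain ⟨k, hk⟩ := A2 i
        exact ⟨k, by rw [hk, hi]; rfl⟩
      | @tail _ _ t' hm =>
        obtain ⟨j, hj⟩ := ih.2 t' hm
        obtain ⟨k, hk⟩ := A3 j
        exact ⟨k, by rw [hk, hj]; rfl⟩

theorem key (N : ℕ) : ∀ l : List ℕ, l.sum = N →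
    (X l = 0 → F.{u} l ≤ 0 ∧ 0 ≤ F.{u} l) ∧ (X l ≠ 0 → ¬ F.{u} l ≤ 0 ∧ ¬ 0 ≤ F.{u} l) := by
  induction N using Nat.strong_induction_on with
  | _ N ih =>
  intro l hN
  refine ⟨fun h0 => ⟨?_, ?_⟩, fun h0 => ⟨?_, ?_⟩⟩
  · rw [le_zero_iff']
    intro k
    obtain ⟨l', hm, he⟩ := (F_left l).1 k
    rw [he, lf_zero_iff']
    have hx : X l' ≠ 0 := by rw [← h0]; exact Mv_xor hm
    obtain ⟨l'', hm', hx'⟩ := mex_move l' 0 (Nat.pos_of_ne_zero hx)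
    obtain ⟨j, hj⟩ := (F_right l').2 l'' hm'
    refine ⟨j, ?_⟩
    rw [hj]
    have := lt_trans (Mv_sum hm') (Mv_sum hm)
    exact ((ih _ (hN ▸ this) l'' rfl).1 hx').1
  · rw [zero_le_iff']
    intro k
    obtain ⟨l', hm, he⟩ := (F_right l).1 k
    rw [he, zero_lf_iff']
    have hx : X l' ≠ 0 := by rw [← h0]; exact Mv_xor hm
    obtain ⟨l'', hm', hx'⟩ := mex_move l' 0 (Nat.pos_of_ne_zero hx)
    obtain ⟨j, hj⟩ := (F_left l').2 l'' hm'
    refine ⟨j, ?_⟩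
    rw [hj]
    have := lt_trans (Mv_sum hm') (Mv_sum hm)
    exact ((ih _ (hN ▸ this) l'' rfl).1 hx').2
  · intro h
    rw [le_zero_iff'] at h
    obtain ⟨l', hm, hx'⟩ := mex_move l 0 (Nat.pos_of_ne_zero h0)
    obtain ⟨k, hk⟩ := (F_left l).2 l' hm
    have h1 := h k
    rw [hk, lf_zero_iff'] at h1
    obtain ⟨j, hj⟩ := h1
    obtain ⟨l'', hm', he⟩ := (F_right l').1 j
    rw [he] at hj
    have hx : X l'' ≠ 0 := by rw [← hx']; exact Mv_xor hm'
    have := lt_trans (Mv_sum hm') (Mv_sum hm)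
    exact ((ih _ (hN ▸ this) l'' rfl).2 hx).1 hj
  · intro h
    rw [zero_le_iff'] at h
    obtain ⟨l', hm, hx'⟩ := mex_move l 0 (Nat.pos_of_ne_zero h0)
    obtain ⟨k, hk⟩ := (F_right l).2 l' hm
    have h1 := h k
    rw [hk, zero_lf_iff'] at h1
    obtain ⟨j, hj⟩ := h1
    obtain ⟨l'', hm', he⟩ := (F_left l').1 j
    rw [he] at hj
    have hx : X l'' ≠ 0 := by rw [← hx']; exact Mv_xor hm'
    have := lt_trans (Mv_sum hm') (Mv_sum hm)
    exact ((ih _ (hN ▸ this) l'' rfl).2 hx).2 hj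

end NimPort

theorem nim_sum_equiv_zero_iff (l : List ℕ) :
    (l.foldr (fun (n : ℕ) (G : SetTheory.PGame) =>
        SetTheory.PGame.nim (n : Ordinal) + G) 0 ≈ 0) ↔
      l.foldr (· ^^^ ·) 0 = 0 := by
  show NimPort.F l ≈ 0 ↔ NimPort.X l = 0
  constructor
  · intro h
    by_contra hne
    exact ((NimPort.key _ l rfl).2 hne).1 h.1
  · intro h
    exact (NimPort.key _ l rfl).1 h
end

section
/- Let X be a positive natural number and let g = (Nat.digits 2 X).count 1 be the number of 1s in the binary representation of X. Then the number of unordered pairs of positive integers with sum X and XOR equal to X, i.e., the cardinality of {(a, b) : 0 < a ∧ a ≤ b ∧ a + b = X ∧ a XOR b = X}, equals 2^(g − 1) − 1. -/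
open Finset

lemma mem_bitIndices' {n i : ℕ} : i ∈ n.bitIndices ↔ n.testBit i = true := by
  induction n using Nat.binaryRec generalizing i with
  | zero => simp
  | bit b n ih =>
    cases b
    · rw [Nat.bitIndices_bit_false]
      cases i with
      | zero => simp [Nat.testBit_bit_zero]
      | succ i => simp [Nat.testBit_succ, Nat.mul_div_cancel_left, ih]
    · rw [Nat.bitIndices_bit_true]
      cases i with
      | zero => simp [Nat.testBit_zero]
      | succ i => have : (2*n+1)/2 = n := by omega
                  simp [Nat.testBit_succ, this, ih]

lemma testBit_twoPowSum {s : Finset ℕ} {i : ℕ} :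
    (∑ j ∈ s, 2 ^ j).testBit i = decide (i ∈ s) := by
  have : (∑ j ∈ s, 2 ^ j).testBit i = true ↔ i ∈ s := by
    rw [← mem_bitIndices', ← List.mem_toFinset, Finset.toFinset_bitIndices_twoPowSum]
  rw [Bool.eq_iff_iff, this]; simp

lemma addxor : ∀ a b : ℕ, a + b = (a ^^^ b) + 2 * (a &&& b) := by
  intro a
  induction a using Nat.binaryRec with
  | zero => simp
  | bit ba a ih =>
    intro b
    induction b using Nat.binaryRec with
    | zero => simp
    | bit bb b _ =>
      rw [Nat.xor_bit, Nat.land_bit]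
      have := ih b
      cases ba <;> cases bb <;> simp [Nat.bit_val] <;> omega

lemma count1 : ∀ n : ℕ, (Nat.digits 2 n).count 1 = n.bitIndices.length := by
  intro n
  induction n using Nat.binaryRec with
  | zero => simp
  | bit b n ih =>
    rcases eq_or_ne (Nat.bit b n) 0 with h | h
    · rw [h]; obtain ⟨rfl, rfl⟩ := Nat.bit_eq_zero_iff.mp h; simp
    · rw [Nat.digits_def' (by norm_num) (Nat.pos_of_ne_zero h)]
      cases b
      · have h0 : n ≠ 0 := by rintro rfl; simp at h
        rw [Nat.bit_false] at *
        simp [Nat.mul_div_cancel_left, Nat.mul_mod_right, ih, List.count_cons]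
      · rw [Nat.bit_true] at *
        have h1 : (2 * n + 1) % 2 = 1 := by omega
        have h2 : (2 * n + 1) / 2 = n := by omega
        simp [h1, h2, ih, List.count_cons]

theorem count_pairs_sum_eq_xor (X : ℕ) (hX : 0 < X)
    (g : ℕ) (hg : g = (Nat.digits 2 X).count 1) :
    {p : ℕ × ℕ | 0 < p.1 ∧ p.1 ≤ p.2 ∧ p.1 + p.2 = X ∧ p.1 ^^^ p.2 = X}.ncard =
      2 ^ (g - 1) - 1 := by
  classical
  set es : Finset ℕ → ℕ := fun s => ∑ i ∈ s, 2 ^ i with hes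
  have hinj : Function.Injective es := Finset.geomSum_injective le_rfl
  set B : Finset ℕ := X.bitIndices.toFinset with hBdef
  have hesB : es B = X := Finset.twoPowSum_toFinset_bitIndices X
  have hcard : B.card = g := by
    rw [hg, count1, hBdef, List.toFinset_card_of_nodup Nat.bitIndices_sorted.nodup]
  have hes0 : es ∅ = 0 := by simp [hes]
  have hesne : ∀ s : Finset ℕ, s ≠ ∅ → 0 < es s := by
    intro s h
    rcases Nat.eq_zero_or_pos (es s) with h0 | h0
    · exact absurd (hinj (by rw [hes0, h0])) h
    · exact h0
  have hBne : B ≠ ∅ := by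
    intro h; rw [h, hes0] at hesB; omega
  have hg1 : 1 ≤ g := by
    rw [← hcard]; exact Finset.card_pos.mpr (Finset.nonempty_of_ne_empty hBne)
  have hunion : ∀ s t : Finset ℕ, Disjoint s t → es (s ∪ t) = es s + es t :=
    fun s t h => Finset.sum_union h
  have hxor : ∀ s t : Finset ℕ, es s ^^^ es t = es (symmDiff s t) := by
    intro s t
    apply Nat.eq_of_testBit_eq
    intro i
    rw [Nat.testBit_xor]
    show ((es s).testBit i).xor ((es t).testBit i) = (es (symmDiff s t)).testBit i
    rw [hes]
    simp only [testBit_twoPowSum, Finset.mem_symmDiff]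
    rcases em (i ∈ s) with h | h <;> rcases em (i ∈ t) with h' | h' <;> simp [h, h']
  set T : Finset (Finset ℕ) := B.powerset.filter (fun s => s ≠ ∅ ∧ 2 * es s ≤ X) with hT
  have hSet : {p : ℕ × ℕ | 0 < p.1 ∧ p.1 ≤ p.2 ∧ p.1 + p.2 = X ∧ p.1 ^^^ p.2 = X} =
      ↑(T.image (fun s => (es s, es (B \ s)))) := by
    ext ⟨a, b⟩
    simp only [Set.mem_setOf_eq, Finset.coe_image, Set.mem_image, Finset.mem_coe, hT,
      Finset.mem_filter, Finset.mem_powerset]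
    constructor
    · rintro ⟨ha, hab, hsum, hxoreq⟩
      have hand : a &&& b = 0 := by have := addxor a b; omega
      set s : Finset ℕ := a.bitIndices.toFinset with hsdef
      set t : Finset ℕ := b.bitIndices.toFinset with htdef
      have hesa : es s = a := Finset.twoPowSum_toFinset_bitIndices a
      have hesb : es t = b := Finset.twoPowSum_toFinset_bitIndices b
      have hdisj : Disjoint s t := by
        rw [Finset.disjoint_left]
        intro i his hit
        have h1 : a.testBit i = true := mem_bitIndices'.mp (List.mem_toFinset.mp his)
        have h2 : b.testBit i = true := mem_bitIndices'.mp (List.mem_toFinset.mp hit)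
        have h3 : (a &&& b).testBit i = true := by rw [Nat.testBit_and, h1, h2]; rfl
        rw [hand] at h3
        simp at h3
      have hBst : B = s ∪ t := by
        have h1 : a ^^^ b = es (s ∪ t) := by
          rw [← hesa, ← hesb, hxor, hdisj.symmDiff_eq_sup]; rfl
        rw [hBdef, ← hxoreq, h1, hes]
        exact Finset.toFinset_bitIndices_twoPowSum _
      refine ⟨s, ⟨?_, ?_, ?_⟩, ?_⟩
      · rw [hBst]; exact Finset.subset_union_left
      · intro h; rw [h, hes0] at hesa; omega
      · omega
      · rw [hBst, Finset.union_sdiff_cancel_left hdisj, hesa, hesb]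
    · rintro ⟨s, ⟨hsub, hne, hle⟩, heq⟩
      have hdisj : Disjoint s (B \ s) := Finset.disjoint_sdiff
      have hBst : s ∪ (B \ s) = B := Finset.union_sdiff_of_subset hsub
      have hsum : es s + es (B \ s) = X := by rw [← hunion _ _ hdisj, hBst, hesB]
      have hxoreq : es s ^^^ es (B \ s) = X := by
        rw [hxor, hdisj.symmDiff_eq_sup]
        show es (s ∪ (B \ s)) = X
        rw [hBst, hesB]
      obtain ⟨rfl, rfl⟩ : es s = a ∧ es (B \ s) = b := by
        rw [Prod.ext_iff] at heq; exact heq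
      exact ⟨hesne s hne, by omega, hsum, hxoreq⟩
  rw [hSet, Set.ncard_coe_finset,
    Finset.card_image_of_injOn (fun s _ t _ h => hinj (congrArg Prod.fst h))]
  -- counting T
  have hinv : ∀ s : Finset ℕ, s ⊆ B → B \ (B \ s) = s := by
    intro s hsub
    rw [Finset.sdiff_sdiff_self_left, Finset.inter_eq_right.mpr hsub]
  have hsum' : ∀ s : Finset ℕ, s ⊆ B → es s + es (B \ s) = X := by
    intro s hsub
    rw [← hunion _ _ Finset.disjoint_sdiff, Finset.union_sdiff_of_subset hsub, hesB]
  have hesfix : ∀ s : Finset ℕ, s ≠ ∅ → es s ≠ es (B \ s) := by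
    intro s hne h
    have h2 := hinj h
    have hd : Disjoint s (B \ s) := Finset.disjoint_sdiff
    rw [← h2] at hd
    exact hne (by simpa using disjoint_self.mp hd)
  set P : Finset (Finset ℕ) := B.powerset.filter (fun s => s ≠ ∅ ∧ s ≠ B) with hP
  have hcne : ∀ s : Finset ℕ, s ⊆ B → s ≠ B → B \ s ≠ ∅ := by
    intro s hsub hneB h
    apply hneB
    apply Finset.eq_of_subset_of_card_le hsub
    have h2 := Finset.card_sdiff_of_subset hsub
    rw [h] at h2
    simp at h2
    have := Finset.card_le_card hsub
    omega
  have hcneB : ∀ s : Finset ℕ, s ⊆ B → s ≠ ∅ → B \ s ≠ B := by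
    intro s hsub hne h
    apply hne
    have h2 := hinv s hsub
    rw [h] at h2
    rw [← h2]
    simp
  have hTP : T ⊆ P := by
    intro s hs
    rw [hT, Finset.mem_filter, Finset.mem_powerset] at hs
    obtain ⟨hsub, hne, hle⟩ := hs
    rw [hP, Finset.mem_filter, Finset.mem_powerset]
    refine ⟨hsub, hne, ?_⟩
    rintro rfl
    rw [hesB] at hle
    omega
  have hcT : ∀ s ∈ P, (s ∈ T ↔ B \ s ∉ T) := by
    intro s hs
    rw [hP, Finset.mem_filter, Finset.mem_powerset] at hs
    obtain ⟨hsub, hne, hneB⟩ := hs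
    have h1 := hsum' s hsub
    have h2 := hesfix s hne
    constructor
    · intro h hcTmem
      rw [hT, Finset.mem_filter] at h hcTmem
      obtain ⟨-, -, hle1⟩ := h
      obtain ⟨-, -, hle2⟩ := hcTmem
      omega
    · intro h
      rw [hT, Finset.mem_filter, Finset.mem_powerset]
      refine ⟨hsub, hne, ?_⟩
      by_contra hgt
      apply h
      rw [hT, Finset.mem_filter, Finset.mem_powerset]
      exact ⟨Finset.sdiff_subset, hcne s hsub hneB, by omega⟩
  have hsubB_ofT : ∀ s ∈ T, s ⊆ B := by
    intro s hs
    rw [hT, Finset.mem_filter, Finset.mem_powerset] at hs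
    exact hs.1
  have hcover : P = T ∪ T.image (fun s => B \ s) := by
    ext s
    constructor
    · intro hs
      rcases em (s ∈ T) with h | h
      · exact Finset.mem_union_left _ h
      · apply Finset.mem_union_right
        rw [Finset.mem_image]
        have hsP := hs
        rw [hP, Finset.mem_filter, Finset.mem_powerset] at hsP
        obtain ⟨hsub, hne, hneB⟩ := hsP
        have hcsP : B \ s ∈ P := by
          rw [hP, Finset.mem_filter, Finset.mem_powerset]
          exact ⟨Finset.sdiff_subset, hcne s hsub hneB, hcneB s hsub hne⟩
        have hmem : B \ s ∈ T := by
          rw [hcT (B \ s) hcsP, hinv s hsub]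
          exact h
        exact ⟨B \ s, hmem, hinv s hsub⟩
    · intro hs
      rcases Finset.mem_union.mp hs with h | h
      · exact hTP h
      · rw [Finset.mem_image] at h
        obtain ⟨t, ht, rfl⟩ := h
        have htP := hTP ht
        rw [hP, Finset.mem_filter, Finset.mem_powerset] at htP ⊢
        obtain ⟨hsub, hne, hneB⟩ := htP
        exact ⟨Finset.sdiff_subset, hcne t hsub hneB, hcneB t hsub hne⟩
  have hdisjTU : Disjoint T (T.image (fun s => B \ s)) := by
    rw [Finset.disjoint_right]
    intro s hs hsT
    rw [Finset.mem_image] at hs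
    obtain ⟨t, ht, rfl⟩ := hs
    exact (hcT t (hTP ht)).mp ht hsT
  have hPcard : P.card = 2 ^ g - 2 := by
    have hPs : P = B.powerset \ {∅, B} := by
      ext s
      rw [hP, Finset.mem_filter, Finset.mem_sdiff, Finset.mem_insert, Finset.mem_singleton]
      tauto
    rw [hPs, Finset.card_sdiff_of_subset]
    · rw [Finset.card_powerset, hcard, Finset.card_insert_of_notMem (by
        simp only [Finset.mem_singleton]
        exact fun h => hBne h.symm), Finset.card_singleton]
    · intro s hs
      rw [Finset.mem_insert, Finset.mem_singleton] at hs
      rw [Finset.mem_powerset]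
      rcases hs with rfl | rfl
      · exact Finset.empty_subset B
      · exact Finset.Subset.refl B
  have himgcard : (T.image (fun s => B \ s)).card = T.card := by
    apply Finset.card_image_of_injOn
    intro s hs t ht h
    rw [← hinv s (hsubB_ofT s hs), ← hinv t (hsubB_ofT t ht)]
    simp only at h
    rw [h]
  have hcount : 2 * T.card = 2 ^ g - 2 := by
    rw [← hPcard, hcover, Finset.card_union_of_disjoint hdisjTU, himgcard]
    omega
  have hpow : 2 ^ g = 2 * 2 ^ (g - 1) := by
    conv_lhs => rw [← Nat.sub_add_cancel hg1]
    rw [pow_succ]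
    ring
  have hpos : 0 < 2 ^ (g - 1) := Nat.two_pow_pos _
  omega
end

section
/- For every natural number S, three times the number of 3-pile zero-nim positions with total sum S equals the sum, over n from 1 to S − 1, of the number of unordered pairs of positive integers with sum n and XOR equal to S − n. That is: 3 * |{(a, b, c) : 0 < a ∧ a < b ∧ b < c ∧ a + b + c = S ∧ a XOR b XOR c = 0}| = ∑_{n=1}^{S−1} |{(a, b) : 0 < a ∧ a ≤ b ∧ a + b = n ∧ a XOR b = S − n}|. -/
open Finset

private lemma xor3_aux {a b c : ℕ} (h : a ^^^ b ^^^ c = 0) :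
    a ^^^ b = c ∧ a ^^^ c = b ∧ b ^^^ c = a := by
  have h1 : a ^^^ b = c := Nat.eq_of_xor_eq_zero h
  refine ⟨h1, ?_, ?_⟩
  · rw [← h1, Nat.xor_xor_cancel_left]
  · rw [← h1, Nat.xor_comm a b, Nat.xor_xor_cancel_left]

private def Tset (S : ℕ) : Finset (ℕ × ℕ × ℕ) :=
  ((range (S+1)) ×ˢ (range (S+1)) ×ˢ (range (S+1))).filter
    (fun t => 0 < t.1 ∧ t.1 < t.2.1 ∧ t.2.1 < t.2.2 ∧
      t.1 + t.2.1 + t.2.2 = S ∧ t.1 ^^^ t.2.1 ^^^ t.2.2 = 0)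

private def Pset (S n : ℕ) : Finset (ℕ × ℕ) :=
  ((range (S+1)) ×ˢ (range (S+1))).filter
    (fun p => 0 < p.1 ∧ p.1 ≤ p.2 ∧ p.1 + p.2 = n ∧ p.1 ^^^ p.2 = S - n)

private lemma mem_Tset {S : ℕ} {t : ℕ × ℕ × ℕ} :
    t ∈ Tset S ↔ 0 < t.1 ∧ t.1 < t.2.1 ∧ t.2.1 < t.2.2 ∧
      t.1 + t.2.1 + t.2.2 = S ∧ t.1 ^^^ t.2.1 ^^^ t.2.2 = 0 := by
  simp only [Tset, mem_filter, mem_product, mem_range]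
  constructor
  · tauto
  · intro h; exact ⟨⟨by omega, by omega, by omega⟩, h⟩

private lemma mem_Pset {S n : ℕ} (hn : n ≤ S) {p : ℕ × ℕ} :
    p ∈ Pset S n ↔ 0 < p.1 ∧ p.1 ≤ p.2 ∧ p.1 + p.2 = n ∧ p.1 ^^^ p.2 = S - n := by
  simp only [Pset, mem_filter, mem_product, mem_range]
  constructor
  · tauto
  · intro h; exact ⟨⟨by omega, by omega⟩, h⟩

theorem three_mul_zero_nim_count (S : ℕ) :
    3 * {t : ℕ × ℕ × ℕ | 0 < t.1 ∧ t.1 < t.2.1 ∧ t.2.1 < t.2.2 ∧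
          t.1 + t.2.1 + t.2.2 = S ∧ t.1 ^^^ t.2.1 ^^^ t.2.2 = 0}.ncard =
      ∑ n ∈ Finset.Icc 1 (S - 1),
        {p : ℕ × ℕ | 0 < p.1 ∧ p.1 ≤ p.2 ∧ p.1 + p.2 = n ∧
          p.1 ^^^ p.2 = S - n}.ncard := by
  have hT : {t : ℕ × ℕ × ℕ | 0 < t.1 ∧ t.1 < t.2.1 ∧ t.2.1 < t.2.2 ∧
      t.1 + t.2.1 + t.2.2 = S ∧ t.1 ^^^ t.2.1 ^^^ t.2.2 = 0} = ↑(Tset S) := by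
    ext t; simp [mem_Tset, Set.mem_setOf_eq]
  rw [hT, Set.ncard_coe_finset]
  have hP : ∀ n ∈ Finset.Icc 1 (S-1),
      {p : ℕ × ℕ | 0 < p.1 ∧ p.1 ≤ p.2 ∧ p.1 + p.2 = n ∧
        p.1 ^^^ p.2 = S - n}.ncard = (Pset S n).card := by
    intro n hn
    rw [Finset.mem_Icc] at hn
    have : {p : ℕ × ℕ | 0 < p.1 ∧ p.1 ≤ p.2 ∧ p.1 + p.2 = n ∧
        p.1 ^^^ p.2 = S - n} = ↑(Pset S n) := by
      ext p; simp [mem_Pset (by omega : n ≤ S), Set.mem_setOf_eq]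
    rw [this, Set.ncard_coe_finset]
  rw [Finset.sum_congr rfl hP]
  rw [← Finset.card_sigma]
  have hcard : 3 * (Tset S).card = ((univ : Finset (Fin 3)) ×ˢ Tset S).card := by
    rw [Finset.card_product]; simp
  rw [hcard]
  apply Finset.card_bij (fun x _ => match x.1 with
    | 0 => ⟨x.2.1 + x.2.2.1, (x.2.1, x.2.2.1)⟩
    | 1 => ⟨x.2.1 + x.2.2.2, (x.2.1, x.2.2.2)⟩
    | 2 => ⟨x.2.2.1 + x.2.2.2, (x.2.2.1, x.2.2.2)⟩)
  · -- maps into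
    rintro ⟨i, a, b, c⟩ hx
    rw [Finset.mem_product, mem_Tset] at hx
    obtain ⟨-, ha, hab, hbc, hsum, hxor⟩ := hx
    obtain ⟨h1, h2, h3⟩ := xor3_aux hxor
    rw [Finset.mem_sigma]
    fin_cases i <;> dsimp only at ha hab hbc hsum hxor h1 h2 h3 ⊢ <;> refine ⟨Finset.mem_Icc.mpr ⟨by omega, by omega⟩, ?_⟩
    · rw [mem_Pset (by omega)]
      exact ⟨ha, by omega, rfl, by rw [h1]; omega⟩
    · rw [mem_Pset (by omega)]
      exact ⟨ha, by omega, rfl, by rw [h2]; omega⟩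
    · rw [mem_Pset (by omega)]
      exact ⟨by omega, by omega, rfl, by rw [h3]; omega⟩
  · -- injective
    rintro ⟨i, a, b, c⟩ hx ⟨j, a', b', c'⟩ hy heq
    rw [Finset.mem_product, mem_Tset] at hx hy
    obtain ⟨-, ha, hab, hbc, hsum, hxor⟩ := hx
    obtain ⟨-, ha', hab', hbc', hsum', hxor'⟩ := hy
    obtain ⟨h1, h2, h3⟩ := xor3_aux hxor
    obtain ⟨h1', h2', h3'⟩ := xor3_aux hxor'
    dsimp only at ha hab hbc hsum h1 h2 h3 ha' hab' hbc' hsum' h1' h2' h3'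
    fin_cases i <;> fin_cases j <;>
      simp only [Sigma.mk.inj_iff, heq_eq_eq, Prod.mk.injEq] at heq <;>
      simp only [Prod.mk.injEq, true_and] <;> omega
  · -- surjective
    rintro ⟨n, a, b⟩ hy
    rw [Finset.mem_sigma, Finset.mem_Icc] at hy
    dsimp only at hy
    obtain ⟨⟨hn1, hn2⟩, hp⟩ := hy
    rw [mem_Pset (by omega)] at hp
    dsimp only at hp
    obtain ⟨ha, hab, hsum, hxor⟩ := hp
    set c := S - n with hc
    have hc1 : 1 ≤ c := by omega
    have hxorc : a ^^^ b = c := hxor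
    have hxor0 : a ^^^ b ^^^ c = 0 := by rw [hxorc, Nat.xor_self]
    have haneb : a ≠ b := by
      intro h; rw [h, Nat.xor_self] at hxorc; omega
    have halt : a < b := lt_of_le_of_ne hab haneb
    have hca : c ≠ a := by
      intro h
      have hb0 : b = 0 := by
        rw [← Nat.xor_xor_cancel_left a b, hxorc, h, Nat.xor_self]
      omega
    have hcb : c ≠ b := by
      intro h
      have ha0 : a = 0 := by
        rw [← Nat.xor_xor_cancel_left b a, Nat.xor_comm b a, hxorc, h, Nat.xor_self]
      omega
    rcases lt_trichotomy c a with h | h | h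
    · refine ⟨⟨2, c, a, b⟩, ?_, ?_⟩
      · rw [Finset.mem_product, mem_Tset]
        refine ⟨Finset.mem_univ _, ?_⟩
        show 0 < c ∧ c < a ∧ a < b ∧ c + a + b = S ∧ c ^^^ a ^^^ b = 0
        refine ⟨by omega, h, halt, by omega, ?_⟩
        rw [Nat.xor_assoc, hxorc, Nat.xor_self]
      · simp [hsum]
    · omega
    · rcases lt_trichotomy c b with h2 | h2 | h2
      · refine ⟨⟨1, a, c, b⟩, ?_, ?_⟩
        · rw [Finset.mem_product, mem_Tset]
          refine ⟨Finset.mem_univ _, ?_⟩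
          show 0 < a ∧ a < c ∧ c < b ∧ a + c + b = S ∧ a ^^^ c ^^^ b = 0
          refine ⟨ha, h, h2, by omega, ?_⟩
          rw [Nat.xor_assoc, Nat.xor_comm c b, ← Nat.xor_assoc]
          exact hxor0
        · simp [hsum]
      · omega
      · refine ⟨⟨0, a, b, c⟩, ?_, ?_⟩
        · rw [Finset.mem_product, mem_Tset]
          refine ⟨Finset.mem_univ _, ?_⟩
          show 0 < a ∧ a < b ∧ b < c ∧ a + b + c = S ∧ a ^^^ b ^^^ c = 0
          exact ⟨ha, halt, h2, by omega, hxor0⟩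
        · simp [hsum]
end

section
/- Let k be a natural number with k ≥ 1. The number of positions of the form (a, b, a + b) with nim-sum zero, with 0 < a < b, in which the two larger piles b and a + b each have exactly k binary digits, equals 3^(k−1) − 2^(k−1). Formally: |{(a, b) : 0 < a ∧ a < b ∧ a AND b = 0 ∧ 2^(k−1) ≤ b ∧ b < 2^k}| = 3^(k−1) − 2^(k−1). -/
lemma myAndZeroIff (a b : ℕ) : a &&& b = 0 ↔ ∀ i, a.testBit i = false ∨ b.testBit i = false := by
  constructor
  · intro h i
    have := congrArg (Nat.testBit · i) h
    simp only [Nat.testBit_and, Nat.zero_testBit, Bool.and_eq_false_iff] at this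
    exact this
  · intro h
    apply Nat.eq_of_testBit_eq
    intro i
    simp only [Nat.testBit_and, Nat.zero_testBit]
    rcases h i with h | h <;> simp [h]

lemma myParity (a b : ℕ) :
    a &&& b = 0 ↔ ¬(a % 2 = 1 ∧ b % 2 = 1) ∧ (a / 2) &&& (b / 2) = 0 := by
  simp only [myAndZeroIff]
  constructor
  · intro h
    refine ⟨?_, fun i => ?_⟩
    · rcases h 0 with h0 | h0 <;> simp only [Nat.testBit_zero, decide_eq_false_iff_not] at h0 <;> tauto
    · have := h (i + 1)
      simpa [Nat.testBit_succ] using this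
  · rintro ⟨h0, h⟩ i
    cases i with
    | zero => simp only [Nat.testBit_zero, decide_eq_false_iff_not]; tauto
    | succ i => simpa [Nat.testBit_succ] using h i

lemma myTwoPowAdd (m a c : ℕ) (ha : a < 2 ^ m) (hc : c < 2 ^ m) :
    a &&& (2 ^ m + c) = 0 ↔ a &&& c = 0 := by
  simp only [myAndZeroIff]
  have ham : a.testBit m = false := Nat.testBit_lt_two_pow ha
  constructor <;> intro h i <;> rcases lt_trichotomy i m with hi | rfl | hi
  · rcases h i with h' | h'
    · exact Or.inl h'
    · right; rwa [Nat.testBit_two_pow_add_gt hi] at h'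
  · exact Or.inl ham
  · right
    exact Nat.testBit_lt_two_pow (lt_of_lt_of_le hc (Nat.pow_le_pow_right (by norm_num) hi.le))
  · rcases h i with h' | h'
    · exact Or.inl h'
    · right; rwa [Nat.testBit_two_pow_add_gt hi]
  · exact Or.inl ham
  · right
    apply Nat.testBit_lt_two_pow
    calc 2 ^ m + c < 2 ^ m + 2 ^ m := by omega
    _ = 2 ^ (m + 1) := by ring
    _ ≤ 2 ^ i := Nat.pow_le_pow_right (by norm_num) hi

def T (m : ℕ) : Finset (ℕ × ℕ) :=
  (Finset.range (2 ^ m) ×ˢ Finset.range (2 ^ m)).filter fun p => p.1 &&& p.2 = 0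

lemma T_card (m : ℕ) : (T m).card = 3 ^ m := by
  induction m with
  | zero => decide
  | succ m ih =>
    have h2 : 2 ^ (m + 1) = 2 * 2 ^ m := by ring
    have key : (T (m + 1)).card =
        (((Finset.range 2 ×ˢ Finset.range 2).filter fun e => ¬(e.1 = 1 ∧ e.2 = 1)) ×ˢ T m).card := by
      apply Finset.card_nbij' (fun p => ((p.1 % 2, p.2 % 2), (p.1 / 2, p.2 / 2)))
        (fun q => (2 * q.2.1 + q.1.1, 2 * q.2.2 + q.1.2))
      · intro p hp
        simp only [T, Finset.mem_coe, Finset.mem_filter, Finset.mem_product, Finset.mem_range, h2] at hp ⊢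
        rw [myParity] at hp
        obtain ⟨⟨r1, r2⟩, hpar1, hpar2⟩ := hp
        refine ⟨⟨⟨by omega, by omega⟩, hpar1⟩, ⟨by omega, by omega⟩, hpar2⟩
      · intro q hq
        simp only [T, Finset.mem_coe, Finset.mem_filter, Finset.mem_product, Finset.mem_range, h2] at hq ⊢
        obtain ⟨⟨⟨he1, he2⟩, he⟩, ⟨hq1, hq2⟩, hq0⟩ := hq
        refine ⟨⟨by omega, by omega⟩, ?_⟩
        rw [myParity]
        constructor
        · omega
        · have : (2 * q.2.1 + q.1.1) / 2 = q.2.1 := by omega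
          rw [this]
          have : (2 * q.2.2 + q.1.2) / 2 = q.2.2 := by omega
          rw [this]
          exact hq0
      · intro p _
        ext <;> simp <;> omega
      · intro q hq
        simp only [T, Finset.mem_coe, Finset.mem_filter, Finset.mem_product, Finset.mem_range] at hq
        obtain ⟨⟨⟨he1, he2⟩, _⟩, _⟩ := hq
        ext <;> simp <;> omega
    rw [key, Finset.card_product, ih]
    have : ((Finset.range 2 ×ˢ Finset.range 2).filter fun e : ℕ × ℕ => ¬(e.1 = 1 ∧ e.2 = 1)).card = 3 := by decide
    rw [this]
    ring

theorem count_a_b_a_add_b_positions (k : ℕ) (hk : 1 ≤ k) :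
    {p : ℕ × ℕ | 0 < p.1 ∧ p.1 < p.2 ∧ p.1 &&& p.2 = 0 ∧
      2 ^ (k - 1) ≤ p.2 ∧ p.2 < 2 ^ k}.ncard = 3 ^ (k - 1) - 2 ^ (k - 1) := by
  obtain ⟨m, rfl⟩ : ∃ m, k = m + 1 := ⟨k - 1, by omega⟩
  simp only [Nat.add_sub_cancel]
  have h2 : (2:ℕ) ^ (m + 1) = 2 * 2 ^ m := by ring
  set F : Finset (ℕ × ℕ) :=
    (Finset.range (2 ^ (m + 1)) ×ˢ Finset.Ico (2 ^ m) (2 ^ (m + 1))).filter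
      fun p => 0 < p.1 ∧ p.1 < p.2 ∧ p.1 &&& p.2 = 0 with hF
  have hset : {p : ℕ × ℕ | 0 < p.1 ∧ p.1 < p.2 ∧ p.1 &&& p.2 = 0 ∧
      2 ^ m ≤ p.2 ∧ p.2 < 2 ^ (m + 1)} = ↑F := by
    ext p
    simp only [Set.mem_setOf_eq, hF, Finset.coe_filter, Finset.mem_product, Finset.mem_range,
      Finset.mem_Ico, Set.mem_setOf_eq]
    constructor
    · rintro ⟨h1, h2', h3, h4, h5⟩
      exact ⟨⟨by omega, by omega, by omega⟩, h1, h2', h3⟩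
    · rintro ⟨⟨_, _, _⟩, h1, h2', h3⟩
      exact ⟨h1, h2', h3, by omega, by omega⟩
  rw [hset, Set.ncard_coe_finset]
  -- bijection between F and the positive-first-coordinate part of T m
  have hcard : F.card = ((T m).filter fun p => 0 < p.1).card := by
    apply Finset.card_nbij' (fun p => (p.1, p.2 - 2 ^ m)) (fun q => (q.1, 2 ^ m + q.2))
    · intro p hp
      simp only [hF, T, Finset.mem_coe, Finset.mem_filter, Finset.mem_product, Finset.mem_range,
        Finset.mem_Ico] at hp ⊢
      obtain ⟨⟨hp1, hp2a, hp2b⟩, hpos, hlt, hand⟩ := hp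
      -- first coordinate is < 2 ^ m
      have hbm : p.2.testBit m = true := by
        rw [Nat.testBit_eq_decide_div_mod_eq]
        have : p.2 / 2 ^ m = 1 := by
          have h1 : p.2 / 2 ^ m < 2 := Nat.div_lt_of_lt_mul
            (by rw [show (2:ℕ) ^ m * 2 = 2 ^ (m + 1) by ring]; exact hp2b)
          have := (Nat.le_div_iff_mul_le ((Nat.pow_pos (by norm_num : 0 < 2) : 0 < 2 ^ m))).mpr
            (by omega : 1 * 2 ^ m ≤ p.2)
          omega
        simp [this]
      have ham : p.1.testBit m = false := by
        rcases (myAndZeroIff _ _).mp hand m with h | h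
        · exact h
        · rw [hbm] at h; exact absurd h (by simp)
      have hp1m : p.1 < 2 ^ m := by
        by_contra hge
        push_neg at hge
        have hdiv : p.1 / 2 ^ m = 1 := by
          have h1 : p.1 / 2 ^ m < 2 := Nat.div_lt_of_lt_mul
            (by rw [show (2:ℕ) ^ m * 2 = 2 ^ (m + 1) by ring]; exact hp1)
          have := (Nat.le_div_iff_mul_le ((Nat.pow_pos (by norm_num : 0 < 2) : 0 < 2 ^ m))).mpr
            (by omega : 1 * 2 ^ m ≤ p.1)
          omega
        rw [Nat.testBit_eq_decide_div_mod_eq, hdiv] at ham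
        simp at ham
      have hc : p.2 - 2 ^ m < 2 ^ m := by omega
      refine ⟨⟨⟨by omega, by omega⟩, ?_⟩, hpos⟩
      have := (myTwoPowAdd m p.1 (p.2 - 2 ^ m) hp1m hc).mp
      rw [show 2 ^ m + (p.2 - 2 ^ m) = p.2 by omega] at this
      exact this hand
    · intro q hq
      simp only [hF, T, Finset.mem_coe, Finset.mem_filter, Finset.mem_product, Finset.mem_range,
        Finset.mem_Ico] at hq ⊢
      obtain ⟨⟨⟨hq1, hq2⟩, hand⟩, hpos⟩ := hq
      refine ⟨⟨by omega, by omega, by omega⟩, hpos, by omega, ?_⟩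
      exact (myTwoPowAdd m q.1 q.2 hq1 hq2).mpr hand
    · intro p hp
      simp only [hF, Finset.mem_coe, Finset.mem_filter, Finset.mem_product, Finset.mem_Ico] at hp
      ext <;> simp <;> omega
    · intro q _
      ext <;> simp
  rw [hcard]
  -- split T m by positivity of first coordinate
  have hsplit := Finset.card_filter_add_card_filter_not
    (s := T m) (p := fun p => 0 < p.1)
  have hzero : ((T m).filter fun p => ¬0 < p.1).card = 2 ^ m := by
    rw [show (2:ℕ) ^ m = (Finset.range (2 ^ m)).card from (Finset.card_range _).symm]
    apply Finset.card_nbij' (fun p => p.2) (fun c => (0, c))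
    · intro p hp
      simp only [T, Finset.mem_coe, Finset.mem_filter, Finset.mem_product, Finset.mem_range] at hp ⊢
      exact hp.1.1.2
    · intro c hc
      simp only [T, Finset.mem_coe, Finset.mem_filter, Finset.mem_product, Finset.mem_range] at hc ⊢
      exact ⟨⟨⟨(Nat.pow_pos (by norm_num : 0 < 2) : 0 < 2 ^ m), hc⟩, by simp [Nat.zero_and]⟩, by simp⟩
    · intro p hp
      simp only [T, Finset.mem_coe, Finset.mem_filter, Finset.mem_product, Finset.mem_range] at hp
      have : p.1 = 0 := by omega
      ext <;> simp [this.symm]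
    · intro c _
      simp
  rw [T_card] at hsplit
  omega
end
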